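/- For every real number x, the following identity holds in ℝ[[q]]: (∑_{n≥1} q^{2n(n−1)})·(∑_{n≥1} T_{4n−2}(x/2) q^{2n(n−1)}) = (1 + 2∑_{n≥1} T_{4n}(x/2) q^{4n²})·(∑_{n≥1} T_{4n−2}(x/2) q^{4n(n−1)}). -/

import Mathlib

noncomputable def mkSum (e : ℕ → ℕ) (c : ℕ → ℝ) : PowerSeries ℝ :=
  PowerSeries.mk fun k => ∑ n ∈ Finset.range (k + 2), if 1 ≤ n ∧ e n = k then c n else 0

open Finset

lemma coeff_mkSum (e : ℕ → ℕ) (c : ℕ → ℝ) (k : ℕ) :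
    (PowerSeries.coeff k) (mkSum e c) =
      ∑ n ∈ Finset.range (k + 2), if 1 ≤ n ∧ e n = k then c n else 0 := by
  simp [mkSum]

lemma mkSum_extend (e : ℕ → ℕ) (c : ℕ → ℝ) (he : ∀ n, 1 ≤ n → n ≤ e n + 1)
    {k M : ℕ} (hk : k ≤ M) :
    (PowerSeries.coeff k) (mkSum e c) =
      ∑ n ∈ Finset.range (M + 2), if 1 ≤ n ∧ e n = k then c n else 0 := by
  rw [coeff_mkSum]
  apply Finset.sum_subset
  · exact Finset.range_subset_range.2 (by omega)
  · intro n _ hn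
    rw [if_neg]
    rintro ⟨h1, h2⟩
    exact hn (Finset.mem_range.2 (by have := he n h1; omega))

lemma coeff_mul_mkSum (e f : ℕ → ℕ) (c d : ℕ → ℝ)
    (he : ∀ n, 1 ≤ n → n ≤ e n + 1) (hf : ∀ n, 1 ≤ n → n ≤ f n + 1) (N : ℕ) :
    (PowerSeries.coeff N) (mkSum e c * mkSum f d) =
      ∑ p ∈ Finset.range (N + 2) ×ˢ Finset.range (N + 2),
        if 1 ≤ p.1 ∧ 1 ≤ p.2 ∧ e p.1 + f p.2 = N then c p.1 * d p.2 else 0 := by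
  rw [PowerSeries.coeff_mul]
  have step : ∀ pq ∈ Finset.HasAntidiagonal.antidiagonal N,
      (PowerSeries.coeff pq.1) (mkSum e c) * (PowerSeries.coeff pq.2) (mkSum f d) =
      ∑ p ∈ Finset.range (N + 2) ×ˢ Finset.range (N + 2),
        if (1 ≤ p.1 ∧ e p.1 = pq.1) ∧ (1 ≤ p.2 ∧ f p.2 = pq.2) then c p.1 * d p.2 else 0 := by
    intro pq hpq
    rw [Finset.HasAntidiagonal.mem_antidiagonal] at hpq
    rw [mkSum_extend e c he (M := N) (by omega), mkSum_extend f d hf (M := N) (by omega),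
      Finset.sum_mul_sum, ← Finset.sum_product']
    apply Finset.sum_congr rfl
    intro p _
    split_ifs with h1 h2 h3 <;> simp_all
  rw [Finset.sum_congr rfl step, Finset.sum_comm]
  apply Finset.sum_congr rfl
  intro p _
  rcases Classical.em (1 ≤ p.1 ∧ 1 ≤ p.2) with h | h
  · have : ∀ pq : ℕ × ℕ, ((1 ≤ p.1 ∧ e p.1 = pq.1) ∧ (1 ≤ p.2 ∧ f p.2 = pq.2)) ↔
        pq = (e p.1, f p.2) := by
      intro pq
      constructor
      · rintro ⟨⟨_, h1⟩, ⟨_, h2⟩⟩; exact Prod.ext h1.symm h2.symm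
      · rintro rfl; exact ⟨⟨h.1, rfl⟩, ⟨h.2, rfl⟩⟩
    simp only [this]
    rw [Finset.sum_ite_eq' (Finset.HasAntidiagonal.antidiagonal N) (e p.1, f p.2) (fun _ => c p.1 * d p.2)]
    simp only [Finset.HasAntidiagonal.mem_antidiagonal]
    by_cases hN : e p.1 + f p.2 = N
    · rw [if_pos hN, if_pos ⟨h.1, h.2, hN⟩]
    · rw [if_neg hN, if_neg (by tauto)]
  · rw [if_neg (by tauto)]
    apply Finset.sum_eq_zero
    intro pq _
    rw [if_neg (by tauto)]

set_option maxHeartbeats 1000000 in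

private lemma bijS2 (N : ℕ) (C : ℤ → ℝ) (hneg : ∀ k, C (-k) = C k) :
    ∑ p ∈ (Finset.range (N + 2) ×ˢ Finset.range (N + 2)).filter
        (fun p => 1 ≤ p.1 ∧ 1 ≤ p.2 ∧ 4 * p.1 ^ 2 + 4 * p.2 * (p.2 - 1) = N),
      (C (4 * (p.1 : ℤ) + (4 * (p.2 : ℤ) - 2)) + C (4 * (p.1 : ℤ) - (4 * (p.2 : ℤ) - 2)))
    = ∑ p ∈ (Finset.range (N + 2) ×ˢ Finset.range (N + 2)).filter
        (fun p => (1 ≤ p.1 ∧ 1 ≤ p.2 ∧ 2 * p.1 * (p.1 - 1) + 2 * p.2 * (p.2 - 1) = N)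
          ∧ p.2 < p.1),
      (C (4 * (p.1 : ℤ) - 2) + C (4 * (p.2 : ℤ) - 2)) := by
  refine Finset.sum_nbij'
    (fun p => (p.1 + p.2, if p.1 < p.2 then p.2 - p.1 else p.1 - p.2 + 1))
    (fun q => if (q.1 - q.2) % 2 = 0 then ((q.1 - q.2) / 2, (q.1 + q.2) / 2)
      else ((q.1 + q.2 - 1) / 2, (q.1 - q.2 + 1) / 2)) ?_ ?_ ?_ ?_ ?_
  · rintro ⟨j, k⟩ hp
    simp only [Finset.mem_filter, Finset.mem_product, Finset.mem_range] at hp ⊢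
    obtain ⟨⟨hjN, hkN⟩, hj, hk, hexp⟩ := hp
    rcases Nat.lt_or_ge j k with hjk | hjk
    · rw [if_pos hjk]
      obtain ⟨t, rfl⟩ : ∃ t, k = j + t + 1 := ⟨k - j - 1, by omega⟩
      have h1 : j + t + 1 - j = t + 1 := by omega
      rw [h1]
      simp only [Nat.add_sub_cancel] at hexp
      have h2 : j + (j + t + 1) - 1 = 2 * j + t := by omega
      have h3 : t + 1 - 1 = t := by omega
      rw [h2, h3]
      repeat' apply And.intro
      all_goals first | omega | nlinarith [hexp, hj, sq_nonneg j]
    · rw [if_neg (by omega)]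
      obtain ⟨t, rfl⟩ : ∃ t, j = k + t := ⟨j - k, by omega⟩
      obtain ⟨k', rfl⟩ : ∃ k', k = k' + 1 := ⟨k - 1, by omega⟩
      have h1 : k' + 1 + t - (k' + 1) + 1 = t + 1 := by omega
      rw [h1]
      simp only [Nat.add_sub_cancel] at hexp
      have h2 : k' + 1 + t + (k' + 1) - 1 = 2 * k' + t + 1 := by omega
      have h3 : t + 1 - 1 = t := by omega
      rw [h2, h3]
      repeat' apply And.intro
      all_goals first | omega | nlinarith [hexp]
  · rintro ⟨m, n⟩ hq
    simp only [Finset.mem_filter, Finset.mem_product, Finset.mem_range] at hq ⊢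
    obtain ⟨⟨hmN, hnN⟩, ⟨hm, hn, hexp⟩, hlt'⟩ := hq
    obtain ⟨n', rfl⟩ : ∃ n', n = n' + 1 := ⟨n - 1, by omega⟩
    rcases Nat.even_or_odd (m - (n' + 1)) with ⟨t, ht⟩ | ⟨t, ht⟩
    · obtain ⟨t', rfl⟩ : ∃ t', m = n' + 1 + 2 * (t' + 1) := ⟨t - 1, by omega⟩
      rw [if_pos (by omega)]
      have h1 : (n' + 1 + 2 * (t' + 1) - (n' + 1)) / 2 = t' + 1 := by omega
      have h2 : (n' + 1 + 2 * (t' + 1) + (n' + 1)) / 2 = n' + t' + 2 := by omega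
      rw [h1, h2]
      have h3 : n' + 1 + 2 * (t' + 1) - 1 = n' + 2 * t' + 2 := by omega
      simp only [Nat.add_sub_cancel, h3] at hexp
      have h4 : n' + t' + 2 - 1 = n' + t' + 1 := by omega
      rw [h4]
      repeat' apply And.intro
      all_goals first | omega | nlinarith [hexp]
    · obtain ⟨t', rfl⟩ : ∃ t', m = n' + 1 + (2 * t' + 1) := ⟨t, by omega⟩
      rw [if_neg (by omega)]
      have h1 : (n' + 1 + (2 * t' + 1) + (n' + 1) - 1) / 2 = n' + t' + 1 := by omega
      have h2 : (n' + 1 + (2 * t' + 1) - (n' + 1) + 1) / 2 = t' + 1 := by omega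
      rw [h1, h2]
      have h3 : n' + 1 + (2 * t' + 1) - 1 = n' + 2 * t' + 1 := by omega
      simp only [Nat.add_sub_cancel, h3] at hexp
      have h4 : t' + 1 - 1 = t' := by omega
      rw [h4]
      repeat' apply And.intro
      all_goals first | omega | nlinarith [hexp]
  · rintro ⟨j, k⟩ hp
    simp only [Finset.mem_filter, Finset.mem_product, Finset.mem_range] at hp
    obtain ⟨⟨hjN, hkN⟩, hj, hk, hexp⟩ := hp
    dsimp only
    rcases Nat.lt_or_ge j k with hjk | hjk
    · rw [if_pos hjk, if_pos (by omega)]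
      exact Prod.ext_iff.2 ⟨by omega, by omega⟩
    · rw [if_neg (by omega : ¬ j < k), if_neg (by omega)]
      exact Prod.ext_iff.2 ⟨by omega, by omega⟩
  · rintro ⟨m, n⟩ hq
    simp only [Finset.mem_filter, Finset.mem_product, Finset.mem_range] at hq
    obtain ⟨⟨hmN, hnN⟩, ⟨hm, hn, hexp⟩, hlt'⟩ := hq
    dsimp only
    rcases Nat.even_or_odd (m - n) with ⟨t, ht⟩ | ⟨t, ht⟩
    · rw [if_pos (by omega : (m - n) % 2 = 0), if_pos (by omega)]
      exact Prod.ext_iff.2 ⟨by omega, by omega⟩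
    · rw [if_neg (by omega : ¬ (m - n) % 2 = 0), if_neg (by omega)]
      exact Prod.ext_iff.2 ⟨by omega, by omega⟩
  · rintro ⟨j, k⟩ hp
    simp only [Finset.mem_filter, Finset.mem_product, Finset.mem_range] at hp
    obtain ⟨⟨hjN, hkN⟩, hj, hk, hexp⟩ := hp
    dsimp only
    rcases Nat.lt_or_ge j k with hjk | hjk
    · rw [if_pos hjk]
      have h2 : ((j + k : ℕ) : ℤ) = (j : ℤ) + k := by push_cast; ring
      have h3 : ((k - j : ℕ) : ℤ) = (k : ℤ) - j := by
        push_cast [Nat.cast_sub (le_of_lt hjk)]; ring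
      rw [h2, h3]
      have h1 : 4 * ((j : ℤ) + k) - 2 = 4 * (j : ℤ) + (4 * (k : ℤ) - 2) := by ring
      rw [h1]
      have h4 : 4 * ((k : ℤ) - j) - 2 = -(4 * (j : ℤ) - (4 * (k : ℤ) - 2)) := by ring
      rw [h4, hneg]
    · rw [if_neg (by omega)]
      have h2 : ((j + k : ℕ) : ℤ) = (j : ℤ) + k := by push_cast; ring
      have h3 : ((j - k + 1 : ℕ) : ℤ) = (j : ℤ) - k + 1 := by
        push_cast [Nat.cast_sub hjk]; ring
      rw [h2, h3]
      congr 1 <;> congr 1 <;> ring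

lemma ite_split3 {v : ℝ} (P : Prop) [Decidable P] (a b : ℕ) :
    (if P then v else 0) = (if P ∧ a = b then v else 0) + (if P ∧ b < a then v else 0)
      + (if P ∧ a < b then v else 0) := by
  by_cases hP : P
  · simp only [eq_true hP, true_and, if_true]
    rcases Nat.lt_trichotomy a b with h | h | h
    · rw [if_neg (by omega : ¬ a = b), if_neg (by omega : ¬ b < a), if_pos h]; ring
    · rw [if_pos h, if_neg (by omega : ¬ b < a), if_neg (by omega : ¬ a < b)]; ring
    · rw [if_neg (by omega : ¬ a = b), if_pos h, if_neg (by omega : ¬ a < b)]; ring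
  · simp [hP]

lemma diag_sum (N : ℕ) (C : ℤ → ℝ) :
    ∑ p ∈ (Finset.range (N + 2) ×ˢ Finset.range (N + 2)).filter
        (fun p => (1 ≤ p.1 ∧ 1 ≤ p.2 ∧ 2 * p.1 * (p.1 - 1) + 2 * p.2 * (p.2 - 1) = N)
          ∧ p.1 = p.2),
      C (4 * (p.2 : ℤ) - 2)
    = ∑ n ∈ (Finset.range (N + 2)).filter (fun n => 1 ≤ n ∧ 4 * n * (n - 1) = N),
      C (4 * (n : ℤ) - 2) := by
  refine Finset.sum_nbij' (fun p => p.2) (fun n => (n, n)) ?_ ?_ ?_ ?_ ?_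
  · rintro ⟨a, b⟩ hp
    simp only [Finset.mem_filter, Finset.mem_product, Finset.mem_range] at hp ⊢
    obtain ⟨⟨hr1, hr2⟩, ⟨h1, h2, hexp⟩, heq⟩ := hp
    subst heq
    obtain ⟨a', rfl⟩ : ∃ a', a = a' + 1 := ⟨a - 1, by omega⟩
    simp only [Nat.add_sub_cancel] at hexp ⊢
    exact ⟨hr2, by omega, by nlinarith [hexp]⟩
  · rintro n hn
    simp only [Finset.mem_filter, Finset.mem_product, Finset.mem_range] at hn ⊢
    obtain ⟨hr, h1, hexp⟩ := hn
    obtain ⟨n', rfl⟩ : ∃ n', n = n' + 1 := ⟨n - 1, by omega⟩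
    simp only [Nat.add_sub_cancel] at hexp ⊢
    refine ⟨⟨hr, hr⟩, ⟨by omega, by omega, by nlinarith [hexp]⟩, trivial⟩
  · rintro ⟨a, b⟩ hp
    simp only [Finset.mem_filter] at hp
    exact Prod.ext_iff.2 ⟨hp.2.2.symm, rfl⟩
  · intro n _; rfl
  · intro p _; rfl

lemma swap_sum (N : ℕ) (C : ℤ → ℝ) :
    ∑ p ∈ (Finset.range (N + 2) ×ˢ Finset.range (N + 2)).filter
        (fun p => (1 ≤ p.1 ∧ 1 ≤ p.2 ∧ 2 * p.1 * (p.1 - 1) + 2 * p.2 * (p.2 - 1) = N)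
          ∧ p.1 < p.2),
      C (4 * (p.2 : ℤ) - 2)
    = ∑ p ∈ (Finset.range (N + 2) ×ˢ Finset.range (N + 2)).filter
        (fun p => (1 ≤ p.1 ∧ 1 ≤ p.2 ∧ 2 * p.1 * (p.1 - 1) + 2 * p.2 * (p.2 - 1) = N)
          ∧ p.2 < p.1),
      C (4 * (p.1 : ℤ) - 2) := by
  refine Finset.sum_nbij' (fun p => (p.2, p.1)) (fun p => (p.2, p.1)) ?_ ?_ ?_ ?_ ?_
  · rintro ⟨a, b⟩ hp
    simp only [Finset.mem_filter, Finset.mem_product, Finset.mem_range] at hp ⊢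
    obtain ⟨⟨hr1, hr2⟩, ⟨h1, h2, hexp⟩, hlt⟩ := hp
    exact ⟨⟨hr2, hr1⟩, ⟨h2, h1, by omega⟩, by omega⟩
  · rintro ⟨a, b⟩ hp
    simp only [Finset.mem_filter, Finset.mem_product, Finset.mem_range] at hp ⊢
    obtain ⟨⟨hr1, hr2⟩, ⟨h1, h2, hexp⟩, hlt⟩ := hp
    exact ⟨⟨hr2, hr1⟩, ⟨h2, h1, by omega⟩, by omega⟩
  · intro p _; rfl
  · intro p _; rfl
  · intro p _; rfl

lemma core (N : ℕ) (C : ℤ → ℝ) (hneg : ∀ k, C (-k) = C k)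
    (hmul : ∀ a b : ℤ, 2 * (C a * C b) = C (a + b) + C (a - b)) :
    (∑ p ∈ Finset.range (N + 2) ×ˢ Finset.range (N + 2),
      if 1 ≤ p.1 ∧ 1 ≤ p.2 ∧ 2 * p.1 * (p.1 - 1) + 2 * p.2 * (p.2 - 1) = N
        then (1 : ℝ) * C (4 * (p.2 : ℤ) - 2) else 0)
    = (∑ n ∈ Finset.range (N + 2), if 1 ≤ n ∧ 4 * n * (n - 1) = N then C (4 * (n : ℤ) - 2) else 0)
      + 2 * ∑ p ∈ Finset.range (N + 2) ×ˢ Finset.range (N + 2),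
        (if 1 ≤ p.1 ∧ 1 ≤ p.2 ∧ 4 * p.1 ^ 2 + 4 * p.2 * (p.2 - 1) = N
          then C (4 * (p.1 : ℤ)) * C (4 * (p.2 : ℤ) - 2) else 0) := by
  classical
  simp only [one_mul]
  have split : (∑ p ∈ Finset.range (N + 2) ×ˢ Finset.range (N + 2),
      if 1 ≤ p.1 ∧ 1 ≤ p.2 ∧ 2 * p.1 * (p.1 - 1) + 2 * p.2 * (p.2 - 1) = N
        then C (4 * (p.2 : ℤ) - 2) else 0)
      = (∑ p ∈ Finset.range (N + 2) ×ˢ Finset.range (N + 2),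
          if (1 ≤ p.1 ∧ 1 ≤ p.2 ∧ 2 * p.1 * (p.1 - 1) + 2 * p.2 * (p.2 - 1) = N) ∧ p.1 = p.2
            then C (4 * (p.2 : ℤ) - 2) else 0)
        + (∑ p ∈ Finset.range (N + 2) ×ˢ Finset.range (N + 2),
          if (1 ≤ p.1 ∧ 1 ≤ p.2 ∧ 2 * p.1 * (p.1 - 1) + 2 * p.2 * (p.2 - 1) = N) ∧ p.2 < p.1
            then C (4 * (p.2 : ℤ) - 2) else 0)
        + (∑ p ∈ Finset.range (N + 2) ×ˢ Finset.range (N + 2),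
          if (1 ≤ p.1 ∧ 1 ≤ p.2 ∧ 2 * p.1 * (p.1 - 1) + 2 * p.2 * (p.2 - 1) = N) ∧ p.1 < p.2
            then C (4 * (p.2 : ℤ) - 2) else 0) := by
    rw [← Finset.sum_add_distrib, ← Finset.sum_add_distrib]
    exact Finset.sum_congr rfl fun p _ => ite_split3 _ p.1 p.2
  rw [split]
  rw [← Finset.sum_filter, ← Finset.sum_filter, ← Finset.sum_filter, ← Finset.sum_filter,
    ← Finset.sum_filter]
  rw [diag_sum N C, swap_sum N C]
  have hrhs : 2 * ∑ p ∈ (Finset.range (N + 2) ×ˢ Finset.range (N + 2)).filter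
        (fun p => 1 ≤ p.1 ∧ 1 ≤ p.2 ∧ 4 * p.1 ^ 2 + 4 * p.2 * (p.2 - 1) = N),
        C (4 * (p.1 : ℤ)) * C (4 * (p.2 : ℤ) - 2)
      = ∑ p ∈ (Finset.range (N + 2) ×ˢ Finset.range (N + 2)).filter
        (fun p => 1 ≤ p.1 ∧ 1 ≤ p.2 ∧ 4 * p.1 ^ 2 + 4 * p.2 * (p.2 - 1) = N),
        (C (4 * (p.1 : ℤ) + (4 * (p.2 : ℤ) - 2)) + C (4 * (p.1 : ℤ) - (4 * (p.2 : ℤ) - 2))) := by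
    rw [Finset.mul_sum]
    exact Finset.sum_congr rfl fun p _ => hmul _ _
  rw [hrhs, bijS2 N C hneg, Finset.sum_add_distrib]
  ring

theorem cheby_dissection_odd (x : ℝ) :
    (mkSum (fun n => 2 * n * (n - 1)) fun _ => 1) *
        (mkSum (fun n => 2 * n * (n - 1)) fun n =>
          (Polynomial.Chebyshev.T ℝ (4 * (n : ℤ) - 2)).eval (x / 2)) =
      (1 + 2 * mkSum (fun n => 4 * n ^ 2) fun n =>
          (Polynomial.Chebyshev.T ℝ (4 * (n : ℤ))).eval (x / 2)) *
        (mkSum (fun n => 4 * n * (n - 1)) fun n =>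
          (Polynomial.Chebyshev.T ℝ (4 * (n : ℤ) - 2)).eval (x / 2)) := by
  set C : ℤ → ℝ := fun k => (Polynomial.Chebyshev.T ℝ k).eval (x / 2) with hC
  have hneg : ∀ k, C (-k) = C k := by
    intro k
    simp only [hC, Polynomial.Chebyshev.T_neg]
  have hmul : ∀ a b : ℤ, 2 * (C a * C b) = C (a + b) + C (a - b) := by
    intro a b
    have h := congr_arg (Polynomial.eval (x / 2)) (Polynomial.Chebyshev.T_mul_T ℝ a b)
    simp only [Polynomial.eval_mul, Polynomial.eval_add, Polynomial.eval_ofNat] at h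
    simp only [hC]
    rw [← h]; ring
  have he1 : ∀ n, 1 ≤ n → n ≤ 2 * n * (n - 1) + 1 := by
    intro n hn
    obtain ⟨m, rfl⟩ : ∃ m, n = m + 1 := ⟨n - 1, by omega⟩
    simp only [Nat.add_sub_cancel]
    nlinarith
  have he2 : ∀ n : ℕ, 1 ≤ n → n ≤ 4 * n ^ 2 + 1 := by
    intro n hn; nlinarith
  have he3 : ∀ n, 1 ≤ n → n ≤ 4 * n * (n - 1) + 1 := by
    intro n hn
    obtain ⟨m, rfl⟩ : ∃ m, n = m + 1 := ⟨n - 1, by omega⟩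
    simp only [Nat.add_sub_cancel]
    nlinarith
  have hring : (1 + 2 * mkSum (fun n => 4 * n ^ 2) fun n => C (4 * (n : ℤ))) *
        (mkSum (fun n => 4 * n * (n - 1)) fun n => C (4 * (n : ℤ) - 2))
      = (mkSum (fun n => 4 * n * (n - 1)) fun n => C (4 * (n : ℤ) - 2))
        + 2 * ((mkSum (fun n => 4 * n ^ 2) fun n => C (4 * (n : ℤ))) *
          (mkSum (fun n => 4 * n * (n - 1)) fun n => C (4 * (n : ℤ) - 2))) := by
    ring
  rw [hring]
  ext N
  rw [coeff_mul_mkSum _ _ _ _ he1 he1 N, map_add,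
    ← map_ofNat (PowerSeries.C (R := ℝ)) 2, PowerSeries.coeff_C_mul,
    coeff_mul_mkSum _ _ _ _ he2 he3 N, coeff_mkSum]
  exact core N C hneg hmul
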